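/- With A(x) = (12(l²−1)x − 6(l²−2l−1))/(l²+4l+1) and l > 0, equality ∫₀¹ (1+(l−1)x)A(x)g(x)dx = g(0) + l·g(1) for a convex g : [0,1] → ℝ holds if and only if g is affine. -/

import Mathlib

open intervalIntegral MeasureTheory Set

lemma integral_cubic (c3 c2 c1 c0 : ℝ) :
    ∫ x in (0:ℝ)..1, (c3*x^3 + c2*x^2 + c1*x + c0) = c3/4 + c2/3 + c1/2 + c0 := by
  have h : ∀ x ∈ uIcc (0:ℝ) 1, HasDerivAt (fun x : ℝ => c3/4*x^4 + c2/3*x^3 + c1/2*x^2 + c0*x)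
      (c3*x^3 + c2*x^2 + c1*x + c0) x := by
    intro x _
    have h4 := (hasDerivAt_pow 4 x).const_mul (c3/4)
    have h3 := (hasDerivAt_pow 3 x).const_mul (c2/3)
    have h2 := (hasDerivAt_pow 2 x).const_mul (c1/2)
    have h1 := (hasDerivAt_id x).const_mul c0
    refine (((h4.add h3).add h2).add h1).congr_deriv ?_
    push_cast
    ring
  rw [integral_eq_sub_of_hasDerivAt h (by apply Continuous.intervalIntegrable; continuity)]
  ring

lemma edge_bound {f : ℝ → ℝ} {a b C : ℝ} (hab : a ≤ b)
    (hf : ∀ x ∈ Ioc a b, |f x| ≤ C) : |∫ x in a..b, f x| ≤ C * (b - a) := by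
  have h := intervalIntegral.norm_integral_le_of_norm_le_const (C := C) (f := f) (a := a) (b := b)
    (by intro x hx; rw [Set.uIoc_of_le hab] at hx; simpa [Real.norm_eq_abs] using hf x hx)
  simpa [Real.norm_eq_abs, abs_of_nonneg (sub_nonneg.2 hab)] using h

set_option maxHeartbeats 2000000 in
lemma key_nonneg (V W h : ℝ → ℝ) (M L : ℝ)
    (hVc : Continuous V) (hWc : Continuous W)
    (hV0 : ∀ t ∈ Icc (0:ℝ) 1, 0 ≤ V t)
    (hid : ∀ δ y : ℝ, V (y - δ) + V (y + δ) - 2 * V y = δ^2 * W y + δ^4 * M)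
    (hL : 0 ≤ L)
    (hVn0 : ∀ t : ℝ, |t| ≤ 1 → |V t| ≤ L * |t|)
    (hVn1 : ∀ t : ℝ, |t - 1| ≤ 1 → |V t| ≤ L * |t - 1|)
    (hhc : ContinuousOn h (Icc 0 1))
    (hh0 : h 0 = 0) (hh1 : h 1 = 0)
    (hconv : ∀ x δ : ℝ, 0 < δ → δ ≤ x → x ≤ 1 - δ → 2 * h x ≤ h (x - δ) + h (x + δ)) :
    0 ≤ ∫ y in (0:ℝ)..1, W y * h y := by
  -- integrability helper
  have hInt : ∀ (φ : ℝ → ℝ), Continuous φ → ∀ a b : ℝ, 0 ≤ a → a ≤ b → b ≤ 1 →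
      IntervalIntegrable (fun y => φ y * h y) volume a b := by
    intro φ hφ a b ha hab hb1
    apply ContinuousOn.intervalIntegrable
    apply ContinuousOn.mono (s := Icc 0 1)
    · exact hφ.continuousOn.mul hhc
    · rw [uIcc_of_le hab]
      exact fun x hx => ⟨le_trans ha hx.1, le_trans hx.2 hb1⟩
  have hIntW : IntervalIntegrable (fun y => W y * h y) volume 0 1 :=
    hInt W hWc 0 1 le_rfl zero_le_one le_rfl
  have hInth : IntervalIntegrable h volume 0 1 := by
    apply ContinuousOn.intervalIntegrable; rwa [uIcc_of_le zero_le_one]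
  set J : ℝ := ∫ y in (0:ℝ)..1, W y * h y with hJ
  set H : ℝ := ∫ y in (0:ℝ)..1, h y with hH
  clear_value J H
  -- main estimate: for all ε > 0, -(8*L+1)*ε ≤ J
  have main : ∀ ε : ℝ, 0 < ε → -((8*L+1)*ε) ≤ J := by
    intro ε hε
    obtain ⟨δ₁, hδ₁, hδ₁p⟩ := Metric.continuousWithinAt_iff.mp (hhc 0 ⟨le_rfl, zero_le_one⟩) ε hε
    obtain ⟨δ₂, hδ₂, hδ₂p⟩ := Metric.continuousWithinAt_iff.mp (hhc 1 ⟨zero_le_one, le_rfl⟩) ε hε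
    have hb0 : ∀ y ∈ Icc (0:ℝ) 1, |y| < δ₁ → |h y| ≤ ε := by
      intro y hy hyd
      have := hδ₁p hy (by simpa [Real.dist_eq] using hyd)
      rw [Real.dist_eq, hh0, sub_zero] at this; exact this.le
    have hb1 : ∀ y ∈ Icc (0:ℝ) 1, |y - 1| < δ₂ → |h y| ≤ ε := by
      intro y hy hyd
      have := hδ₂p hy (by simpa [Real.dist_eq] using hyd)
      rw [Real.dist_eq, hh1, sub_zero] at this; exact this.le
    set δ : ℝ := min (min (δ₁/3) (δ₂/3)) (min (1/4) (ε / (|M*H| + 1))) with hδdef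
    have hδpos : 0 < δ := by
      apply lt_min (lt_min (by linarith) (by linarith))
      apply lt_min (by norm_num)
      positivity
    have hδd1 : δ ≤ δ₁/3 := le_trans (min_le_left _ _) (min_le_left _ _)
    have hδd2 : δ ≤ δ₂/3 := le_trans (min_le_left _ _) (min_le_right _ _)
    have hδq : δ ≤ 1/4 := le_trans (min_le_right _ _) (min_le_left _ _)
    have hδM : δ ≤ ε / (|M*H| + 1) := le_trans (min_le_right _ _) (min_le_right _ _)
    have hδ1 : δ ≤ 1 := by linarith
    clear hδdef
    clear_value δ
    have hbl : ∀ y : ℝ, 0 ≤ y → y ≤ 2*δ → |h y| ≤ ε := by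
      intro y h0 h2
      refine hb0 y ⟨h0, by linarith⟩ ?_
      rw [abs_of_nonneg h0]; linarith
    have hbr : ∀ y : ℝ, 1 - 2*δ ≤ y → y ≤ 1 → |h y| ≤ ε := by
      intro y h0 h2
      refine hb1 y ⟨by linarith, h2⟩ ?_
      rw [abs_of_nonpos (by linarith)]; simp only [neg_sub]; linarith
    have hVm : Continuous (fun y => V (y - δ)) := hVc.comp (continuous_id.sub continuous_const)
    have hVp : Continuous (fun y => V (y + δ)) := hVc.comp (continuous_id.add continuous_const)
    -- nonneg second-difference integral
    have hI : 0 ≤ ∫ x in δ..(1-δ), V x * (h (x - δ) + h (x + δ) - 2 * h x) := by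
      apply intervalIntegral.integral_nonneg (by linarith)
      intro u hu
      apply mul_nonneg (hV0 u ⟨by linarith [hu.1], by linarith [hu.2]⟩)
      have := hconv u δ hδpos hu.1 hu.2
      linarith
    -- integrability of shifted integrands on [δ, 1-δ]
    have hIntm : IntervalIntegrable (fun x => V x * h (x - δ)) volume δ (1-δ) := by
      apply ContinuousOn.intervalIntegrable
      rw [uIcc_of_le (by linarith)]
      refine hVc.continuousOn.mul (hhc.comp ((continuous_id.sub continuous_const).continuousOn) ?_)
      intro x hx
      rw [mem_Icc] at hx ⊢
      dsimp only
      exact ⟨by linarith [hx.1], by linarith [hx.2]⟩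
    have hIntp : IntervalIntegrable (fun x => V x * h (x + δ)) volume δ (1-δ) := by
      apply ContinuousOn.intervalIntegrable
      rw [uIcc_of_le (by linarith)]
      refine hVc.continuousOn.mul (hhc.comp ((continuous_id.add continuous_const).continuousOn) ?_)
      intro x hx
      rw [mem_Icc] at hx ⊢
      dsimp only
      exact ⟨by linarith [hx.1], by linarith [hx.2]⟩
    have hInt0mid : IntervalIntegrable (fun x => V x * h x) volume δ (1-δ) :=
      hInt V hVc δ (1-δ) hδpos.le (by linarith) (by linarith)
    -- expand I
    have expand : (∫ x in δ..(1-δ), V x * (h (x - δ) + h (x + δ) - 2 * h x))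
        = (∫ x in δ..(1-δ), V x * h (x - δ)) + (∫ x in δ..(1-δ), V x * h (x + δ))
          - 2 * ∫ x in δ..(1-δ), V x * h x := by
      have e : (fun x => V x * (h (x - δ) + h (x + δ) - 2 * h x))
          = fun x => (V x * h (x - δ) + V x * h (x + δ)) - (2:ℝ) * (V x * h x) := by
        funext x; ring
      rw [e, intervalIntegral.integral_sub (hIntm.add hIntp) (hInt0mid.const_mul 2),
        intervalIntegral.integral_add hIntm hIntp, intervalIntegral.integral_const_mul]
    -- substitutions
    have hsubm : (∫ x in δ..(1-δ), V x * h (x - δ))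
        = ∫ y in (0:ℝ)..(1-2*δ), V (y + δ) * h y := by
      have e := intervalIntegral.integral_comp_sub_right
        (a := δ) (b := 1-δ) (fun y => V (y + δ) * h y) δ
      simp only [sub_add_cancel] at e
      rw [show δ - δ = (0:ℝ) by ring, show (1:ℝ) - δ - δ = 1 - 2*δ by ring] at e
      exact e
    have hsubp : (∫ x in δ..(1-δ), V x * h (x + δ))
        = ∫ y in (2*δ)..1, V (y - δ) * h y := by
      have e := intervalIntegral.integral_comp_add_right
        (a := δ) (b := 1-δ) (fun y => V (y - δ) * h y) δ
      simp only [add_sub_cancel_right] at e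
      rw [show δ + δ = 2*δ by ring, show (1:ℝ) - δ + δ = 1 by ring] at e
      exact e
    -- splits into full-interval minus edge pieces
    have hsplitm : (∫ y in (0:ℝ)..(2*δ), V (y - δ) * h y) + (∫ y in (2*δ)..1, V (y - δ) * h y)
        = ∫ y in (0:ℝ)..1, V (y - δ) * h y :=
      intervalIntegral.integral_add_adjacent_intervals
        (hInt _ hVm 0 (2*δ) le_rfl (by linarith) (by linarith))
        (hInt _ hVm (2*δ) 1 (by linarith) (by linarith) le_rfl)
    have hsplitp : (∫ y in (0:ℝ)..(1-2*δ), V (y + δ) * h y) + (∫ y in (1-2*δ)..1, V (y + δ) * h y)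
        = ∫ y in (0:ℝ)..1, V (y + δ) * h y :=
      intervalIntegral.integral_add_adjacent_intervals
        (hInt _ hVp 0 (1-2*δ) le_rfl (by linarith) (by linarith))
        (hInt _ hVp (1-2*δ) 1 (by linarith) (by linarith) le_rfl)
    have hsplit0a : (∫ y in (0:ℝ)..δ, V y * h y) + (∫ y in δ..(1-δ), V y * h y)
        = ∫ y in (0:ℝ)..(1-δ), V y * h y :=
      intervalIntegral.integral_add_adjacent_intervals
        (hInt _ hVc 0 δ le_rfl hδpos.le (by linarith))
        (hInt _ hVc δ (1-δ) hδpos.le (by linarith) (by linarith))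
    have hsplit0b : (∫ y in (0:ℝ)..(1-δ), V y * h y) + (∫ y in (1-δ)..1, V y * h y)
        = ∫ y in (0:ℝ)..1, V y * h y :=
      intervalIntegral.integral_add_adjacent_intervals
        (hInt _ hVc 0 (1-δ) le_rfl (by linarith) (by linarith))
        (hInt _ hVc (1-δ) 1 (by linarith) (by linarith) le_rfl)
    -- combine full-interval terms
    have hT : (∫ y in (0:ℝ)..1, V (y - δ) * h y) + (∫ y in (0:ℝ)..1, V (y + δ) * h y)
        - 2 * (∫ y in (0:ℝ)..1, V y * h y) = δ^2 * J + δ^4 * (M * H) := by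
      rw [← intervalIntegral.integral_const_mul (2:ℝ) (fun y => V y * h y),
        ← intervalIntegral.integral_add (hInt _ hVm 0 1 le_rfl zero_le_one le_rfl)
          (hInt _ hVp 0 1 le_rfl zero_le_one le_rfl),
        ← intervalIntegral.integral_sub
          ((hInt _ hVm 0 1 le_rfl zero_le_one le_rfl).add
            (hInt _ hVp 0 1 le_rfl zero_le_one le_rfl))
          ((hInt _ hVc 0 1 le_rfl zero_le_one le_rfl).const_mul 2)]
      rw [intervalIntegral.integral_congr
        (g := fun y => δ^2 * (W y * h y) + (δ^4 * M) * h y)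
        (fun y _ => by linear_combination (h y) * (hid δ y))]
      rw [intervalIntegral.integral_add (hIntW.const_mul _) (hInth.const_mul _),
        intervalIntegral.integral_const_mul, intervalIntegral.integral_const_mul,
        ← hJ, ← hH]
      ring
    -- edge bounds
    have hLδε : 0 ≤ L * δ * ε := by positivity
    have hEm : |∫ y in (0:ℝ)..(2*δ), V (y - δ) * h y| ≤ (L*δ*ε) * (2*δ - 0) := by
      apply edge_bound (by linarith)
      intro y hy
      rw [abs_mul]
      have h1 : |V (y - δ)| ≤ L * δ := by
        calc |V (y - δ)| ≤ L * |y - δ| := hVn0 _ (abs_le.2 ⟨by linarith [hy.1], by linarith [hy.2]⟩)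
          _ ≤ L * δ := mul_le_mul_of_nonneg_left (abs_le.2 ⟨by linarith [hy.1], by linarith [hy.2]⟩) hL
      have h2 : |h y| ≤ ε := hbl y hy.1.le hy.2
      calc |V (y - δ)| * |h y| ≤ (L*δ) * ε :=
            mul_le_mul h1 h2 (abs_nonneg _) (by positivity)
        _ = L*δ*ε := by ring
    have hEp : |∫ y in (1-2*δ)..1, V (y + δ) * h y| ≤ (L*δ*ε) * (1 - (1-2*δ)) := by
      apply edge_bound (by linarith)
      intro y hy
      rw [abs_mul]
      have h1 : |V (y + δ)| ≤ L * δ := by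
        calc |V (y + δ)| ≤ L * |y + δ - 1| := hVn1 _ (abs_le.2 ⟨by linarith [hy.1], by linarith [hy.2]⟩)
          _ ≤ L * δ := mul_le_mul_of_nonneg_left (abs_le.2 ⟨by linarith [hy.1], by linarith [hy.2]⟩) hL
      have h2 : |h y| ≤ ε := hbr y (by linarith [hy.1]) hy.2
      calc |V (y + δ)| * |h y| ≤ (L*δ) * ε :=
            mul_le_mul h1 h2 (abs_nonneg _) (by positivity)
        _ = L*δ*ε := by ring
    have hE3 : |∫ y in (0:ℝ)..δ, V y * h y| ≤ (L*δ*ε) * (δ - 0) := by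
      apply edge_bound (by linarith)
      intro y hy
      rw [abs_mul]
      have h1 : |V y| ≤ L * δ := by
        calc |V y| ≤ L * |y| := hVn0 _ (abs_le.2 ⟨by linarith [hy.1], by linarith [hy.2]⟩)
          _ ≤ L * δ := mul_le_mul_of_nonneg_left (abs_le.2 ⟨by linarith [hy.1], by linarith [hy.2]⟩) hL
      have h2 : |h y| ≤ ε := hbl y hy.1.le (by linarith [hy.2])
      calc |V y| * |h y| ≤ (L*δ) * ε := mul_le_mul h1 h2 (abs_nonneg _) (by positivity)
        _ = L*δ*ε := by ring
    have hE4 : |∫ y in (1-δ)..1, V y * h y| ≤ (L*δ*ε) * (1 - (1-δ)) := by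
      apply edge_bound (by linarith)
      intro y hy
      rw [abs_mul]
      have h1 : |V y| ≤ L * δ := by
        calc |V y| ≤ L * |y - 1| := hVn1 _ (abs_le.2 ⟨by linarith [hy.1], by linarith [hy.2]⟩)
          _ ≤ L * δ := mul_le_mul_of_nonneg_left (abs_le.2 ⟨by linarith [hy.1], by linarith [hy.2]⟩) hL
      have h2 : |h y| ≤ ε := hbr y (by linarith [hy.1]) hy.2
      calc |V y| * |h y| ≤ (L*δ) * ε := mul_le_mul h1 h2 (abs_nonneg _) (by positivity)
        _ = L*δ*ε := by ring
    -- bound on the δ⁴ term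
    have hδM' : δ * (|M*H| + 1) ≤ ε := by
      rw [le_div_iff₀ (by positivity)] at hδM; exact hδM
    have h3 : δ^2 * |M*H| ≤ δ * |M*H| := by
      linarith [mul_nonneg (mul_nonneg hδpos.le (sub_nonneg.2 hδ1)) (abs_nonneg (M*H))]
    have habs : δ^4 * |M*H| ≤ δ^2 * ε := by
      linarith [mul_le_mul_of_nonneg_left h3 (sq_nonneg δ),
        mul_le_mul_of_nonneg_left hδM' (sq_nonneg δ),
        mul_nonneg (sq_nonneg δ) hδpos.le]
    have hMH : -(δ^2 * ε) ≤ δ^4 * (M * H) := by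
      linarith [mul_le_mul_of_nonneg_left (neg_abs_le (M*H)) (pow_nonneg hδpos.le 4), habs]
    have hMH2 : δ^4 * (M * H) ≤ δ^2 * ε := by
      linarith [mul_le_mul_of_nonneg_left (le_abs_self (M*H)) (pow_nonneg hδpos.le 4), habs]
    -- assemble
    rw [expand, hsubm, hsubp] at hI
    have hfin : δ^2 * (-((8*L+1)*ε)) ≤ δ^2 * J := by
      have em := neg_abs_le (∫ y in (0:ℝ)..(2*δ), V (y - δ) * h y)
      have ep := neg_abs_le (∫ y in (1-2*δ)..1, V (y + δ) * h y)
      have e3 := le_abs_self (∫ y in (0:ℝ)..δ, V y * h y)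
      have e4 := le_abs_self (∫ y in (1-δ)..1, V y * h y)
      linarith [hI, hT, hsplitm, hsplitp, hsplit0a, hsplit0b, hEm, hEp, hE3, hE4, hMH, hMH2, em, ep, e3, e4]
    exact (mul_le_mul_iff_right₀ (pow_pos hδpos 2)).mp hfin
  -- conclude
  by_contra hcon
  push_neg at hcon
  have h8 : (0:ℝ) < 8*L+1 := by linarith
  have hmain := main (-J / (2*(8*L+1))) (div_pos (by linarith) (by linarith))
  have heq : -((8*L+1) * (-J / (2*(8*L+1)))) = J/2 := by
    field_simp
  linarith

set_option maxHeartbeats 3000000 in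
theorem trapezium_one_dim_equality_iff_affine
    (l : ℝ) (hl : 0 < l)
    (A : ℝ → ℝ)
    (hA : ∀ x, A x = (12 * (l ^ 2 - 1) * x - 6 * (l ^ 2 - 2 * l - 1)) / (l ^ 2 + 4 * l + 1))
    (g : ℝ → ℝ) (hgconv : ConvexOn ℝ (Set.Icc 0 1) g)
    (hgcont : ContinuousOn g (Set.Icc 0 1)) :
    (∫ x in (0:ℝ)..1, (1 + (l - 1) * x) * A x * g x = g 0 + l * g 1) ↔
      ∃ a b : ℝ, ∀ x ∈ Set.Icc (0:ℝ) 1, g x = a * x + b := by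
  have hD : (0:ℝ) < l^2+4*l+1 := by nlinarith
  have hAc : Continuous A := by
    have e : A = fun x => (12 * (l ^ 2 - 1) * x - 6 * (l ^ 2 - 2 * l - 1)) / (l ^ 2 + 4 * l + 1) :=
      funext hA
    rw [e]
    exact (continuous_const.mul continuous_id |>.sub continuous_const).div_const _
  have hwc : Continuous (fun x => (1 + (l - 1) * x) * A x) :=
    (continuous_const.add (continuous_const.mul continuous_id)).mul hAc
  -- the affine-exactness computation
  have hwaff : ∀ α β : ℝ,
      (∫ x in (0:ℝ)..1, (1 + (l - 1) * x) * A x * (α*x+β)) = α*l + β*(1+l) := by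
    intro α β
    have e : (fun x => (1 + (l - 1) * x) * A x * (α*x+β))
        = fun x => (α*(12*(l^3-l^2-l+1))/(l^2+4*l+1))*x^3
          + ((β*(12*(l^3-l^2-l+1)) + α*(-6*l^3+30*l^2-6*l-18))/(l^2+4*l+1))*x^2
          + ((β*(-6*l^3+30*l^2-6*l-18) + α*(-6*l^2+12*l+6))/(l^2+4*l+1))*x
          + (β*(-6*l^2+12*l+6))/(l^2+4*l+1) := by
      funext x; rw [hA]; field_simp; ring
    rw [e, integral_cubic]
    field_simp
    ring
  -- the convex remainder
  set f : ℝ → ℝ := fun x => g x - ((g 1 - g 0)*x + g 0) with hfdef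
  have hfc : ContinuousOn f (Icc 0 1) :=
    hgcont.sub ((continuous_const.mul continuous_id |>.add continuous_const).continuousOn)
  have hf0 : f 0 = 0 := by simp [hfdef]
  have hf1 : f 1 = 0 := by simp [hfdef]
  have hIf : ∀ a b : ℝ, 0 ≤ a → a ≤ b → b ≤ 1 → IntervalIntegrable f volume a b := by
    intro a b ha hab hb
    apply ContinuousOn.intervalIntegrable
    apply hfc.mono
    rw [uIcc_of_le hab]
    exact fun x hx => ⟨le_trans ha hx.1, le_trans hx.2 hb⟩
  have hIwg : IntervalIntegrable (fun x => (1 + (l - 1) * x) * A x * g x) volume 0 1 := by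
    apply ContinuousOn.intervalIntegrable
    rw [uIcc_of_le zero_le_one]
    exact hwc.continuousOn.mul hgcont
  have hIwf : IntervalIntegrable (fun x => (1 + (l - 1) * x) * A x * f x) volume 0 1 := by
    apply ContinuousOn.intervalIntegrable
    rw [uIcc_of_le zero_le_one]
    exact hwc.continuousOn.mul hfc
  have hIwa : IntervalIntegrable
      (fun x => (1 + (l - 1) * x) * A x * ((g 1 - g 0)*x + g 0)) volume 0 1 := by
    apply Continuous.intervalIntegrable
    exact hwc.mul (continuous_const.mul continuous_id |>.add continuous_const)
  have hdecomp : (∫ x in (0:ℝ)..1, (1 + (l - 1) * x) * A x * g x)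
      = (∫ x in (0:ℝ)..1, (1 + (l - 1) * x) * A x * f x) + ((g 1 - g 0)*l + g 0*(1+l)) := by
    rw [← hwaff (g 1 - g 0) (g 0), ← intervalIntegral.integral_add hIwf hIwa]
    apply intervalIntegral.integral_congr
    intro x _
    simp only [hfdef]
    ring
  have hring : g 0 + l * g 1 = (g 1 - g 0)*l + g 0*(1+l) := by ring
  constructor
  · -- equality ⇒ affine
    intro heq
    have hwf0 : (∫ x in (0:ℝ)..1, (1 + (l - 1) * x) * A x * f x) = 0 := by
      rw [hdecomp] at heq; linarith
    -- data for key_nonneg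
    set c : ℝ := min 1 l with hcdef
    have hc0 : 0 < c := lt_min one_pos hl
    have hc1 : c ≤ 1 := min_le_left _ _
    have hcl : c ≤ l := min_le_right _ _
    have hcases : (c = 1 ∧ 1 ≤ l) ∨ (c = l ∧ l ≤ 1) := by
      rcases le_total 1 l with h1l | h1l
      · left; exact ⟨by rw [hcdef]; exact min_eq_left h1l, h1l⟩
      · right; exact ⟨by rw [hcdef]; exact min_eq_right h1l, h1l⟩
    clear hcdef
    clear_value c
    have ha' : (0:ℝ) ≤ (l-1)^2*(l+1) := mul_nonneg (sq_nonneg _) (by linarith)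
    set Vf : ℝ → ℝ := fun t => t*(1-t)*((((l-1)^2*(l+1)*t^2 + 2*(2*l+1)*(l-1)*t + (l^2+4*l+1))
        - c*(l^2+4*l+1))/(l^2+4*l+1)) with hVdef
    set Wf : ℝ → ℝ := fun y => 2*c - (1+(l-1)*y) * A y with hWdef
    set Mc : ℝ := -2*(l-1)^2*(l+1)/(l^2+4*l+1) with hMdef
    set B : ℝ := 4*((l-1)^2*(l+1)) + 2*|2*(2*l+1)*(l-1)| + 2*(l^2+4*l+1) with hBdef
    set Lc : ℝ := 2*B/(l^2+4*l+1) with hLdef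
    have hBpos : 0 < B := by
      have := abs_nonneg (2*(2*l+1)*(l-1)); rw [hBdef]; linarith
    have hLc : 0 ≤ Lc := div_nonneg (by linarith) hD.le
    have hVc : Continuous Vf := by
      rw [hVdef]
      exact (continuous_id.mul (continuous_const.sub continuous_id)).mul
        ((((continuous_const.mul (continuous_pow 2)).add
          (continuous_const.mul continuous_id)).add continuous_const |>.sub
            continuous_const).div_const _)
    have hWc : Continuous Wf := by
      rw [hWdef]; exact continuous_const.sub hwc
    have hV0 : ∀ t ∈ Icc (0:ℝ) 1, 0 ≤ Vf t := by
      intro t ht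
      rw [hVdef]
      apply mul_nonneg (mul_nonneg ht.1 (by linarith [ht.2]))
      apply div_nonneg _ hD.le
      rcases hcases with ⟨e, h1l⟩ | ⟨e, h1l⟩
      · rw [e]
        nlinarith [mul_nonneg ha' (mul_nonneg ht.1 ht.1),
          mul_nonneg (mul_nonneg (by linarith : (0:ℝ) ≤ 2*l+1) (by linarith : (0:ℝ) ≤ l-1)) ht.1]
      · rw [e]
        nlinarith [mul_nonneg (mul_nonneg ha' (by linarith [ht.2] : (0:ℝ) ≤ 1-t))
            (by linarith [ht.2] : (0:ℝ) ≤ 1-t),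
          mul_nonneg (mul_nonneg (mul_nonneg hl.le (by linarith : (0:ℝ) ≤ 1-l))
            (by linarith : (0:ℝ) ≤ l+2)) (by linarith [ht.2] : (0:ℝ) ≤ 1-t)]
    have hid : ∀ δ y : ℝ, Vf (y - δ) + Vf (y + δ) - 2 * Vf y = δ^2 * Wf y + δ^4 * Mc := by
      intro δ y
      rw [hVdef, hWdef, hMdef]
      simp only [hA]
      field_simp
      ring
    -- bound |S t - c D| ≤ B for |t| ≤ 2
    have hSb : ∀ t : ℝ, |t| ≤ 2 →
        |(((l-1)^2*(l+1)*t^2 + 2*(2*l+1)*(l-1)*t + (l^2+4*l+1)) - c*(l^2+4*l+1))| ≤ B := by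
      intro t ht
      have ht' := abs_le.mp ht
      have hpt : |2*(2*l+1)*(l-1)*t| ≤ |2*(2*l+1)*(l-1)| * 2 := by
        rw [abs_mul]
        exact mul_le_mul_of_nonneg_left ht (abs_nonneg _)
      have hpt' := abs_le.mp hpt
      have ht2 : t^2 ≤ 4 := by nlinarith
      have hcD : 0 ≤ c*(l^2+4*l+1) := mul_nonneg hc0.le hD.le
      have hcD' : c*(l^2+4*l+1) ≤ (l^2+4*l+1) := by nlinarith
      rw [hBdef, abs_le]
      constructor <;> nlinarith [mul_nonneg ha' (sq_nonneg t),
        mul_le_mul_of_nonneg_left ht2 ha']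
    have hVn0 : ∀ t : ℝ, |t| ≤ 1 → |Vf t| ≤ Lc * |t| := by
      intro t ht
      have ht' := abs_le.mp ht
      have h1t : |1-t| ≤ 2 := by rw [abs_le]; constructor <;> linarith
      have hS := hSb t (by linarith [abs_nonneg t])
      rw [hVdef]
      simp only
      rw [abs_mul, abs_mul, abs_div, abs_of_pos hD]
      calc |t| * |1-t| * (|_ - c*(l^2+4*l+1)| / (l^2+4*l+1))
          ≤ |t| * 2 * (B / (l^2+4*l+1)) := by
            apply mul_le_mul (mul_le_mul_of_nonneg_left h1t (abs_nonneg t))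
              (div_le_div_of_nonneg_right ?_ hD.le) (by positivity)
              (by positivity)
            · exact hS
        _ = Lc * |t| := by rw [hLdef]; ring
    have hVn1 : ∀ t : ℝ, |t - 1| ≤ 1 → |Vf t| ≤ Lc * |t - 1| := by
      intro t ht
      have ht' := abs_le.mp ht
      have h2t : |t| ≤ 2 := by rw [abs_le]; constructor <;> linarith
      have hS := hSb t h2t
      rw [hVdef]
      simp only
      rw [abs_mul, abs_mul, abs_div, abs_of_pos hD]
      have e1 : |1 - t| = |t - 1| := abs_sub_comm 1 t
      rw [e1]
      calc |t| * |t-1| * (|_ - c*(l^2+4*l+1)| / (l^2+4*l+1))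
          ≤ 2 * |t-1| * (B / (l^2+4*l+1)) := by
            apply mul_le_mul (mul_le_mul_of_nonneg_right h2t (abs_nonneg _))
              (div_le_div_of_nonneg_right ?_ hD.le) (by positivity)
              (by positivity)
            · exact hS
        _ = Lc * |t - 1| := by rw [hLdef]; ring
    -- midpoint convexity of f
    have hconv : ∀ x δ : ℝ, 0 < δ → δ ≤ x → x ≤ 1 - δ → 2 * f x ≤ f (x - δ) + f (x + δ) := by
      intro x δ hδ h1 h2
      have hm1 : x - δ ∈ Icc (0:ℝ) 1 := ⟨by linarith, by linarith⟩
      have hm2 : x + δ ∈ Icc (0:ℝ) 1 := ⟨by linarith, by linarith⟩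
      have hcx := hgconv.2 hm1 hm2 (by norm_num : (0:ℝ) ≤ 1/2) (by norm_num : (0:ℝ) ≤ 1/2)
        (by norm_num : (1/2:ℝ) + 1/2 = 1)
      simp only [smul_eq_mul] at hcx
      rw [show (1/2:ℝ)*(x-δ)+(1/2:ℝ)*(x+δ) = x by ring] at hcx
      simp only [hfdef]
      linarith
    -- apply the key lemma
    have hkey := key_nonneg Vf Wf f Mc Lc hVc hWc hV0 hid hLc hVn0 hVn1 hfc hf0 hf1 hconv
    -- turn it into 0 ≤ ∫ f
    have hsplit : (∫ y in (0:ℝ)..1, Wf y * f y)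
        = 2*c*(∫ y in (0:ℝ)..1, f y) - ∫ y in (0:ℝ)..1, (1+(l-1)*y)*A y*f y := by
      rw [← intervalIntegral.integral_const_mul,
        ← intervalIntegral.integral_sub ((hIf 0 1 le_rfl zero_le_one le_rfl).const_mul _) hIwf]
      apply intervalIntegral.integral_congr
      intro y _
      rw [hWdef]
      ring
    have hfint_nonneg : 0 ≤ ∫ y in (0:ℝ)..1, f y := by
      rw [hsplit, hwf0] at hkey
      nlinarith
    -- f ≤ 0 on [0,1]
    have hfnonpos : ∀ x ∈ Icc (0:ℝ) 1, f x ≤ 0 := by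
      intro x hx
      have hcx := hgconv.2 (left_mem_Icc.2 zero_le_one) (right_mem_Icc.2 zero_le_one)
        (by linarith [hx.2] : (0:ℝ) ≤ 1 - x) hx.1 (by ring)
      simp only [smul_eq_mul] at hcx
      rw [show (1-x)*(0:ℝ)+x*1 = x by ring] at hcx
      simp only [hfdef]
      linarith
    have hfint_nonpos : (∫ y in (0:ℝ)..1, f y) ≤ 0 := by
      have hnn := intervalIntegral.integral_nonneg (μ := volume) (f := fun y => -(f y)) zero_le_one
        (fun u hu => by linarith [hfnonpos u hu])
      rw [intervalIntegral.integral_neg] at hnn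
      linarith
    have hH0 : (∫ y in (0:ℝ)..1, f y) = 0 := le_antisymm hfint_nonpos hfint_nonneg
    -- conclude f = 0 on [0,1]
    have hzero : ∀ x ∈ Icc (0:ℝ) 1, f x = 0 := by
      by_contra hcon
      push_neg at hcon
      obtain ⟨x₀, hx₀m, hx₀⟩ := hcon
      have hlt : f x₀ < 0 := lt_of_le_of_ne (hfnonpos x₀ hx₀m) hx₀
      have hx0pos : 0 < x₀ := by
        rcases eq_or_lt_of_le hx₀m.1 with e | e
        · exfalso; rw [← e] at hlt; linarith [hf0, hlt]
        · exact e
      have hx0lt1 : x₀ < 1 := by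
        rcases eq_or_lt_of_le hx₀m.2 with e | e
        · exfalso; rw [e] at hlt; linarith [hf1, hlt]
        · exact e
      obtain ⟨η, hη, hηp⟩ := Metric.continuousWithinAt_iff.mp (hfc x₀ hx₀m) (-(f x₀)/2)
        (div_pos (neg_pos.mpr hlt) two_pos)
      set u : ℝ := max 0 (x₀ - η/2) with hudef
      set v : ℝ := min 1 (x₀ + η/2) with hvdef
      have hu0 : 0 ≤ u := le_max_left _ _
      have hv1 : v ≤ 1 := min_le_left _ _
      have hux : u < x₀ := max_lt hx0pos (by linarith)
      have hxv : x₀ < v := lt_min hx0lt1 (by linarith)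
      have hul : x₀ - η/2 ≤ u := le_max_right _ _
      have hvr : v ≤ x₀ + η/2 := min_le_right _ _
      clear hudef hvdef
      clear_value u v
      have huv : u < v := lt_trans hux hxv
      have hbound : ∀ y ∈ Icc u v, f y ≤ f x₀ / 2 := by
        intro y hy
        have hym : y ∈ Icc (0:ℝ) 1 := ⟨le_trans hu0 hy.1, le_trans hy.2 hv1⟩
        have hdist : dist y x₀ < η := by
          rw [Real.dist_eq, abs_lt]
          constructor
          · linarith [hy.1]
          · linarith [hy.2]
        have := hηp hym hdist
        rw [Real.dist_eq, abs_lt] at this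
        linarith [this.1, this.2]
      have hsplit1 : (∫ y in (0:ℝ)..u, f y) + (∫ y in u..v, f y) = ∫ y in (0:ℝ)..v, f y :=
        intervalIntegral.integral_add_adjacent_intervals
          (hIf 0 u le_rfl hu0 (by linarith)) (hIf u v hu0 huv.le hv1)
      have hsplit2 : (∫ y in (0:ℝ)..v, f y) + (∫ y in v..1, f y) = ∫ y in (0:ℝ)..1, f y :=
        intervalIntegral.integral_add_adjacent_intervals
          (hIf 0 v le_rfl (by linarith) hv1) (hIf v 1 (by linarith) hv1 le_rfl)
      have hI1 : (∫ y in (0:ℝ)..u, f y) ≤ 0 := by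
        have hnn := intervalIntegral.integral_nonneg (μ := volume) (f := fun y => -(f y)) hu0
          (fun w hw => by linarith [hfnonpos w ⟨hw.1, le_trans hw.2 (by linarith)⟩])
        rw [intervalIntegral.integral_neg] at hnn
        linarith
      have hI3 : (∫ y in v..1, f y) ≤ 0 := by
        have hnn := intervalIntegral.integral_nonneg (μ := volume) (f := fun y => -(f y)) hv1
          (fun w hw => by linarith [hfnonpos w ⟨le_trans (by linarith) hw.1, hw.2⟩])
        rw [intervalIntegral.integral_neg] at hnn
        linarith
      have hI2 : (∫ y in u..v, f y) ≤ (f x₀ / 2) * (v - u) := by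
        have := intervalIntegral.integral_mono_on huv.le (hIf u v hu0 huv.le hv1)
          (intervalIntegrable_const) hbound
        rw [intervalIntegral.integral_const, smul_eq_mul] at this
        linarith
      have : (∫ y in (0:ℝ)..1, f y) < 0 := by
        have hvu : 0 < v - u := by linarith
        nlinarith [hI1, hI2, hI3, hsplit1, hsplit2, mul_pos (div_pos (neg_pos.mpr hlt) two_pos) hvu]
      linarith [hH0]
    refine ⟨g 1 - g 0, g 0, fun x hx => ?_⟩
    have := hzero x hx
    simp only [hfdef] at this
    linarith
  · -- affine ⇒ equality
    rintro ⟨a, b, hab⟩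
    have h0' := hab 0 (left_mem_Icc.2 zero_le_one)
    have h1' := hab 1 (right_mem_Icc.2 zero_le_one)
    have hz : (∫ x in (0:ℝ)..1, (1 + (l - 1) * x) * A x * f x) = 0 := by
      rw [show (∫ x in (0:ℝ)..1, (1 + (l - 1) * x) * A x * f x)
          = ∫ x in (0:ℝ)..1, (0:ℝ) from intervalIntegral.integral_congr ?_]
      · simp
      · intro x hx
        rw [uIcc_of_le zero_le_one] at hx
        have := hab x hx
        simp only [hfdef]
        rw [this, h0', h1']
        ring
    rw [hdecomp, hz, hring]
    ring
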